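/- Let f : ℝⁿ → ℝ and g : ℝᵐ → ℝⁿ be twice differentiable, ψ = f ∘ g. Define the hyper-dual extension of a twice differentiable map h at input ⟨x, δx₁, δx₂, δδx⟩ as ⟨h(x), Dh(x)·δx₁, Dh(x)·δx₂, δx₁ᵀ·∇²h(x)·δx₂ + Dh(x)·δδx⟩ (applied componentwise for vector-valued h). Then the hyper-dual extension of ψ equals the composition of the hyper-dual extensions of f and g: applying g's extension to ⟨x, δx₁, δx₂, δδx⟩ and then f's extension yields ⟨ψ(x), Dψ(x)·δx₁, Dψ(x)·δx₂, δx₁ᵀ·∇²ψ(x)·δx₂ + Dψ(x)·δδx⟩. -/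

import Mathlib

/-- The hyper-dual extension of a map `h`: it sends ⟨x, δx₁, δx₂, δδx⟩ to
⟨h(x), Dh(x)δx₁, Dh(x)δx₂, δx₁ᵀ∇²h(x)δx₂ + Dh(x)δδx⟩ (componentwise for vector-valued h). -/
noncomputable def hyperExt {E F : Type*} [NormedAddCommGroup E] [NormedSpace ℝ E]
    [NormedAddCommGroup F] [NormedSpace ℝ F] (h : E → F)
    (p : E × E × E × E) : F × F × F × F :=
  (h p.1, fderiv ℝ h p.1 p.2.1, fderiv ℝ h p.1 p.2.2.1,
    fderiv ℝ (fderiv ℝ h) p.1 p.2.1 p.2.2.1 + fderiv ℝ h p.1 p.2.2.2)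

open ContinuousLinearMap in
lemma second_chain_aux {E F G : Type*} [NormedAddCommGroup E] [NormedSpace ℝ E]
    [NormedAddCommGroup F] [NormedSpace ℝ F] [NormedAddCommGroup G] [NormedSpace ℝ G]
    (f : F → G) (g : E → F) (hf : ContDiff ℝ 2 f) (hg : ContDiff ℝ 2 g) (x : E) (v w : E) :
    fderiv ℝ (fderiv ℝ (f ∘ g)) x v w
      = fderiv ℝ (fderiv ℝ f) (g x) (fderiv ℝ g x v) (fderiv ℝ g x w)
        + fderiv ℝ f (g x) (fderiv ℝ (fderiv ℝ g) x v w) := by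
  have hfd : Differentiable ℝ f := hf.differentiable two_ne_zero
  have hgd : Differentiable ℝ g := hg.differentiable two_ne_zero
  have hff : ContDiff ℝ 1 (fderiv ℝ f) := hf.fderiv_right (by norm_num)
  have hgg : ContDiff ℝ 1 (fderiv ℝ g) := hg.fderiv_right (by norm_num)
  have heq : fderiv ℝ (f ∘ g) = fun y => (fderiv ℝ f (g y)).comp (fderiv ℝ g y) := by
    funext y
    exact fderiv_comp y (hfd (g y)) (hgd y)
  have hc : HasFDerivAt (fun y => fderiv ℝ f (g y))
      ((fderiv ℝ (fderiv ℝ f) (g x)).comp (fderiv ℝ g x)) x :=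
    ((hff.differentiable one_ne_zero (g x)).hasFDerivAt).comp x (hgd x).hasFDerivAt
  have hd : HasFDerivAt (fun y => fderiv ℝ g y) (fderiv ℝ (fderiv ℝ g) x) x :=
    (hgg.differentiable one_ne_zero x).hasFDerivAt
  have H := hc.clm_comp hd
  have h2 : fderiv ℝ (fderiv ℝ (f ∘ g)) x
      = (compL ℝ E F G (fderiv ℝ f (g x))).comp (fderiv ℝ (fderiv ℝ g) x)
        + ((compL ℝ E F G).flip (fderiv ℝ g x)).comp
            ((fderiv ℝ (fderiv ℝ f) (g x)).comp (fderiv ℝ g x)) := by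
    rw [heq]
    exact H.fderiv
  rw [h2]
  simp [add_comm]

/-- the hyper-dual extension of ψ = f ∘ g equals the composition of the
hyper-dual extensions of f and g. -/
theorem hyperExt_comp (m n : ℕ) (f : (Fin n → ℝ) → ℝ)
    (g : (Fin m → ℝ) → (Fin n → ℝ))
    (hf : ContDiff ℝ 2 f) (hg : ContDiff ℝ 2 g)
    (x δx₁ δx₂ δδx : Fin m → ℝ) :
    hyperExt f (hyperExt g (x, δx₁, δx₂, δδx)) = hyperExt (f ∘ g) (x, δx₁, δx₂, δδx) := by
  have hfd : Differentiable ℝ f := hf.differentiable two_ne_zero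
  have hgd : Differentiable ℝ g := hg.differentiable two_ne_zero
  have hchain : ∀ v, fderiv ℝ (f ∘ g) x v = fderiv ℝ f (g x) (fderiv ℝ g x v) := by
    intro v
    rw [fderiv_comp x (hfd (g x)) (hgd x)]
    rfl
  simp only [hyperExt, Prod.mk.injEq]
  refine ⟨rfl, (hchain δx₁).symm, (hchain δx₂).symm, ?_⟩
  rw [second_chain_aux f g hf hg x δx₁ δx₂, hchain δδx, map_add, add_assoc]
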